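/- arXiv:math/0204263 — 2 statements merged into one kernel-verified Lean document; each statement's English description precedes it below -/
import Mathlib

section
/- Combining the previous two results: if ρ : [0,∞) → ℝ^d solves ρ_i'(t) = ∑_{r ≠ i} (λ_{ri}·π_r(t)/π_i(t))·(ρ_r(t) − ρ_i(t)) with λ_{pq} > 0 for p ≠ q and π(t) strictly positive and continuous, and initially max_i ρ_i(0) − min_i ρ_i(0) ≤ 1, then for all t ≥ 0 and all i, k: |ρ_i(t) − ρ_k(t)| ≤ exp(−2·min_{p≠q} sqrt(λ_{pq}·λ_{qp})·t). -/
open Filter Set Topology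

open Finset in
/-- Key lemma (Lemma 2.3 of Chigansky–Liptser, deterministic form): if `ρ` solves
`ρ_i' = ∑_{r≠i} (λ_{ri}·π_r/π_i)·(ρ_r − ρ_i)` with `λ_{pq} > 0` for `p ≠ q`, `π`
strictly positive and continuous, and the initial oscillation is at most `1`, then
`|ρ_i(t) − ρ_k(t)| ≤ exp(−2·min_{p≠q} sqrt(λ_{pq}·λ_{qp})·t)` for all `t ≥ 0`. -/
theorem wonham_key_lemma {d : ℕ} (hd : 2 ≤ d) (lam : Fin d → Fin d → ℝ)
    (hlam : ∀ p q, p ≠ q → 0 < lam p q) (π : ℝ → Fin d → ℝ)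
    (hπpos : ∀ t i, 0 < π t i) (hπcont : ∀ i, ContinuousOn (fun t => π t i) (Set.Ici 0))
    (ρ : ℝ → Fin d → ℝ)
    (hode : ∀ i t, 0 ≤ t →
      HasDerivAt (fun s => ρ s i)
        (∑ r ∈ Finset.univ.erase i, lam r i * π t r / π t i * (ρ t r - ρ t i)) t)
    (hinit : ∀ i k, ρ 0 i - ρ 0 k ≤ 1) :
    ∀ t, 0 ≤ t → ∀ i k : Fin d,
      |ρ t i - ρ t k|
        ≤ Real.exp (-(2 * ((Finset.univ.filter (fun pq : Fin d × Fin d => pq.1 ≠ pq.2)).inf'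
            ⟨(⟨0, by omega⟩, ⟨1, by omega⟩), by simp [Fin.ext_iff]⟩
            (fun pq => Real.sqrt (lam pq.1 pq.2 * lam pq.2 pq.1)))) * t) := by
  classical
  set s : Finset (Fin d × Fin d) :=
    Finset.univ.filter (fun pq : Fin d × Fin d => pq.1 ≠ pq.2) with hsdef
  have hs : s.Nonempty :=
    ⟨(⟨0, by omega⟩, ⟨1, by omega⟩), by simp [hsdef, Fin.ext_iff]⟩
  set lb : ℝ := s.inf' hs (fun pq => Real.sqrt (lam pq.1 pq.2 * lam pq.2 pq.1)) with hlbdef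
  have hmem : ∀ p q : Fin d, p ≠ q → (p, q) ∈ s := fun p q h =>
    Finset.mem_filter.2 ⟨Finset.mem_univ _, h⟩
  have hmem' : ∀ q ∈ s, (q : Fin d × Fin d).1 ≠ q.2 := fun q hq =>
    (Finset.mem_filter.1 hq).2
  set W : ℝ → ℝ := fun x => s.sup' hs (fun q => ρ x q.1 - ρ x q.2) with hWdef
  have hWge : ∀ x, ∀ q ∈ s, ρ x (q : Fin d × Fin d).1 - ρ x q.2 ≤ W x := fun x q hq =>
    Finset.le_sup' (fun q : Fin d × Fin d => ρ x q.1 - ρ x q.2) hq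
  have hW0 : ∀ x, 0 ≤ W x := by
    intro x
    have hne : (⟨0, by omega⟩ : Fin d) ≠ ⟨1, by omega⟩ := by simp [Fin.ext_iff]
    have h1 := hWge x _ (hmem _ _ hne)
    have h2 := hWge x _ (hmem _ _ hne.symm)
    dsimp at h1 h2
    linarith
  -- continuity of W at nonnegative points
  have hWc : ∀ x : ℝ, 0 ≤ x → ContinuousAt W x := by
    intro x hx
    exact ContinuousAt.finset_sup'_apply hs
      (fun p _ => ((hode p.1 x hx).continuousAt.sub (hode p.2 x hx).continuousAt))
  -- the key derivative bound at points where the pair q is active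
  have hkey : ∀ x : ℝ, 0 ≤ x → ∀ q ∈ s, ρ x (q : Fin d × Fin d).1 - ρ x q.2 = W x →
      (∑ r ∈ Finset.univ.erase q.1, lam r q.1 * π x r / π x q.1 * (ρ x r - ρ x q.1)) -
      (∑ r ∈ Finset.univ.erase q.2, lam r q.2 * π x r / π x q.2 * (ρ x r - ρ x q.2))
        ≤ -(2 * lb) * W x := by
    intro x hx q hq hact
    obtain ⟨i, k⟩ := q
    have hik : i ≠ k := hmem' _ hq
    simp only at hact ⊢
    have hmax : ∀ r, ρ x r ≤ ρ x i := by
      intro r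
      by_cases hr : r = k
      · subst hr; have := hW0 x; linarith
      · have := hWge x (r, k) (hmem _ _ hr); dsimp at this; linarith
    have hmin : ∀ r, ρ x k ≤ ρ x r := by
      intro r
      by_cases hr : i = r
      · subst hr; have := hW0 x; linarith
      · have := hWge x (i, r) (hmem _ _ hr); dsimp at this; linarith
    set c1 : ℝ := lam k i * π x k / π x i with hc1def
    set c2 : ℝ := lam i k * π x i / π x k with hc2def
    have hc1 : 0 < c1 := div_pos (mul_pos (hlam _ _ hik.symm) (hπpos x k)) (hπpos x i)
    have hc2 : 0 < c2 := div_pos (mul_pos (hlam _ _ hik) (hπpos x i)) (hπpos x k)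
    -- first sum bound
    have hk1 : k ∈ Finset.univ.erase i := Finset.mem_erase.2 ⟨hik.symm, Finset.mem_univ _⟩
    have hA : (∑ r ∈ Finset.univ.erase i, lam r i * π x r / π x i * (ρ x r - ρ x i))
        ≤ c1 * (ρ x k - ρ x i) := by
      rw [← Finset.add_sum_erase _ _ hk1]
      have hrest : (∑ r ∈ (Finset.univ.erase i).erase k,
          lam r i * π x r / π x i * (ρ x r - ρ x i)) ≤ 0 := by
        apply Finset.sum_nonpos
        intro r hr
        have hri : r ≠ i := (Finset.mem_erase.1 (Finset.mem_erase.1 hr).2).1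
        have hpos : 0 ≤ lam r i * π x r / π x i :=
          (div_pos (mul_pos (hlam _ _ hri) (hπpos x r)) (hπpos x i)).le
        exact mul_nonpos_of_nonneg_of_nonpos hpos (by linarith [hmax r])
      linarith
    -- second sum bound
    have hi2 : i ∈ Finset.univ.erase k := Finset.mem_erase.2 ⟨hik, Finset.mem_univ _⟩
    have hB : c2 * (ρ x i - ρ x k)
        ≤ (∑ r ∈ Finset.univ.erase k, lam r k * π x r / π x k * (ρ x r - ρ x k)) := by
      rw [← Finset.add_sum_erase _ _ hi2]
      have hrest : 0 ≤ (∑ r ∈ (Finset.univ.erase k).erase i,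
          lam r k * π x r / π x k * (ρ x r - ρ x k)) := by
        apply Finset.sum_nonneg
        intro r hr
        have hrk : r ≠ k := (Finset.mem_erase.1 (Finset.mem_erase.1 hr).2).1
        have hpos : 0 ≤ lam r k * π x r / π x k :=
          (div_pos (mul_pos (hlam _ _ hrk) (hπpos x r)) (hπpos x k)).le
        exact mul_nonneg hpos (by linarith [hmin r])
      linarith
    -- AM-GM and the infimum bound
    have hprod : c1 * c2 = lam k i * lam i k := by
      rw [hc1def, hc2def, div_mul_div_comm,
        show lam k i * π x k * (lam i k * π x i) = lam k i * lam i k * (π x i * π x k) by ring,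
        mul_div_assoc, div_self (mul_pos (hπpos x i) (hπpos x k)).ne', mul_one]
    have hlb : lb ≤ Real.sqrt (lam k i * lam i k) :=
      Finset.inf'_le _ (hmem _ _ hik.symm)
    have hs1 := Real.sq_sqrt hc1.le
    have hs2 := Real.sq_sqrt hc2.le
    have hsm : Real.sqrt (c1 * c2) = Real.sqrt c1 * Real.sqrt c2 := Real.sqrt_mul hc1.le _
    have hamgm : 2 * Real.sqrt (c1 * c2) ≤ c1 + c2 := by
      rw [hsm]
      nlinarith [sq_nonneg (Real.sqrt c1 - Real.sqrt c2)]
    have h2lb : 2 * lb ≤ c1 + c2 := by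
      have : Real.sqrt (lam k i * lam i k) = Real.sqrt (c1 * c2) := by rw [hprod]
      nlinarith [hamgm]
    have hWx : ρ x i - ρ x k = W x := hact
    nlinarith [hW0 x, hA, hB, h2lb]
  -- the liminf slope condition needed for Grönwall
  have hslope : ∀ b : ℝ, ∀ x ∈ Set.Ico (0 : ℝ) b, ∀ r, -(2 * lb) * W x < r →
      ∃ᶠ z in 𝓝[>] x, (z - x)⁻¹ * (W z - W x) < r := by
    intro b x hx r hr
    by_contra hcon
    rw [Filter.not_frequently] at hcon
    simp only [not_lt] at hcon
    haveI : (𝓝[>] x).NeBot := nhdsGT_neBot x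
    -- find an active pair along which the slope is ≥ r frequently
    have hexq : ∃ q ∈ s, ∃ᶠ z in 𝓝[>] x,
        (ρ z (q : Fin d × Fin d).1 - ρ z q.2 = W z ∧
          r ≤ (z - x)⁻¹ * (W z - W x)) := by
      by_contra h2
      push_neg at h2
      have hall : ∀ᶠ z in 𝓝[>] x, ∀ q ∈ s,
          ¬(ρ z (q : Fin d × Fin d).1 - ρ z q.2 = W z ∧
            r ≤ (z - x)⁻¹ * (W z - W x)) := by
        rw [Filter.eventually_all_finset]
        intro q hq
        have := h2 q hq
        exact this.mono fun z hz h => absurd h.2 (not_le.2 (hz h.1))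
      have hever : ∀ᶠ z in 𝓝[>] x, ∃ q ∈ s,
          ρ z (q : Fin d × Fin d).1 - ρ z q.2 = W z := by
        apply Filter.Eventually.of_forall
        intro z
        obtain ⟨q, hq, hqe⟩ := Finset.exists_mem_eq_sup' hs
          (fun q : Fin d × Fin d => ρ z q.1 - ρ z q.2)
        exact ⟨q, hq, hqe.symm⟩
      obtain ⟨z, ⟨⟨h1, h2'⟩, h3⟩⟩ := ((hall.and hcon).and hever).exists
      obtain ⟨q, hq, hqe⟩ := h3
      exact h1 q hq ⟨hqe, h2'⟩
    obtain ⟨q, hq, hfreq⟩ := hexq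
    have hfreq' : ∃ᶠ z in 𝓝[>] x,
        ((ρ z (q : Fin d × Fin d).1 - ρ z q.2 = W z ∧
          r ≤ (z - x)⁻¹ * (W z - W x)) ∧ x < z) :=
      hfreq.and_eventually self_mem_nhdsWithin
    have hx0 : (0 : ℝ) ≤ x := hx.1
    have hder : HasDerivAt (fun u => ρ u (q : Fin d × Fin d).1 - ρ u q.2)
        ((∑ r' ∈ Finset.univ.erase q.1,
            lam r' q.1 * π x r' / π x q.1 * (ρ x r' - ρ x q.1)) -
         (∑ r' ∈ Finset.univ.erase q.2,
            lam r' q.2 * π x r' / π x q.2 * (ρ x r' - ρ x q.2))) x :=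
      (hode q.1 x hx0).sub (hode q.2 x hx0)
    set D : ℝ := (∑ r' ∈ Finset.univ.erase (q : Fin d × Fin d).1,
            lam r' q.1 * π x r' / π x q.1 * (ρ x r' - ρ x q.1)) -
         (∑ r' ∈ Finset.univ.erase q.2,
            lam r' q.2 * π x r' / π x q.2 * (ρ x r' - ρ x q.2)) with hDdef
    -- the pair q is active at x
    have hact : ρ x (q : Fin d × Fin d).1 - ρ x q.2 = W x := by
      have hT1 : Tendsto (fun u => ρ u (q : Fin d × Fin d).1 - ρ u q.2) (𝓝[>] x)
          (𝓝 (ρ x q.1 - ρ x q.2)) := hder.continuousAt.continuousWithinAt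
      have hT2 : Tendsto W (𝓝[>] x) (𝓝 (W x)) := (hWc x hx0).continuousWithinAt
      exact tendsto_nhds_unique_of_frequently_eq hT1 hT2 (hfreq.mono fun z hz => hz.1)
    -- the relevant slope tends to D
    have hTs : Tendsto (slope (fun u => ρ u (q : Fin d × Fin d).1 - ρ u q.2) x) (𝓝[>] x)
        (𝓝 D) := by
      refine (hasDerivAt_iff_tendsto_slope.1 hder).mono_left (nhdsWithin_mono x ?_)
      intro z hz
      exact Set.mem_compl_singleton_iff.2 (ne_of_gt hz)
    have hrD : r ≤ D := by
      by_contra hDr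
      push_neg at hDr
      have hev : ∀ᶠ z in 𝓝[>] x,
          slope (fun u => ρ u (q : Fin d × Fin d).1 - ρ u q.2) x z < r :=
        hTs.eventually_lt_const hDr
      obtain ⟨z, hz1, hz2⟩ := hfreq'.and_eventually hev |>.exists
      obtain ⟨⟨hze, hzs⟩, hzx⟩ := hz1
      have hzx' : (0 : ℝ) < z - x := by linarith
      have : slope (fun u => ρ u (q : Fin d × Fin d).1 - ρ u q.2) x z
          = (z - x)⁻¹ * (W z - W x) := by
        rw [slope_def_field, hze, hact, div_eq_inv_mul]
      rw [this] at hz2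
      linarith
    have hDle : D ≤ -(2 * lb) * W x := hkey x hx0 q hq hact
    linarith
  -- Grönwall's inequality gives the bound on W
  have hWbound : ∀ t : ℝ, 0 ≤ t → W t ≤ Real.exp (-(2 * lb) * t) := by
    intro t ht
    have hWcont : ContinuousOn W (Set.Icc 0 t) := fun x hx =>
      (hWc x hx.1).continuousWithinAt
    have hW01 : W 0 ≤ 1 := Finset.sup'_le _ _ (fun q _ => hinit q.1 q.2)
    have := le_gronwallBound_of_liminf_deriv_right_le (f := W)
      (f' := fun x => -(2 * lb) * W x) (δ := 1) (K := -(2 * lb)) (ε := 0) (a := 0) (b := t)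
      hWcont (hslope t) hW01 (fun x _ => by rw [add_zero]) t ⟨ht, le_refl t⟩
    rwa [gronwallBound_ε0, sub_zero, one_mul] at this
  intro t ht i k
  show |ρ t i - ρ t k| ≤ Real.exp (-(2 * lb) * t)
  by_cases hik : i = k
  · subst hik
    simp [Real.exp_pos _ |>.le]
  · rw [abs_le]
    constructor
    · have := (hWge t (k, i) (hmem _ _ (Ne.symm hik))).trans (hWbound t ht)
      dsimp at this
      linarith
    · exact (hWge t (i, k) (hmem _ _ hik)).trans (hWbound t ht)
end

section
/- Deterministic version of Theorem 1 (main bound): under the above setup with weights w_j = β_j/ν_j > 0 define π^β_i = (∑_j w_j A_{ji})/(∑_j w_j q_j). Then ∑_i |m_i − π^β_i| ≤ d²·(max_j w_j)·(max_j 1/w_j)·max_{i,j,k} |ρ_{ji} − ρ_{jk}|, where ρ_{ji} = A_{ji}/m_i. -/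
open Finset in
/-- Deterministic version of Lemma 2.1 / Theorem 1: with `A` nonnegative, row sums `q`
(a probability vector), strictly positive column sums `m` (a probability vector), and
positive weights `w_j`, the reweighted posterior `π^β_i = (∑_j w_j A_{ji})/(∑_j w_j q_j)`
satisfies `∑_i |m_i − π^β_i| ≤ d²·(max_j w_j)·(max_j 1/w_j)·max_{i,j,k} |ρ_{ji} − ρ_{jk}|`
with `ρ_{ji} = A_{ji}/m_i`. -/
theorem reweighted_posterior_bound {d : ℕ} (hd : 0 < d) (A : Fin d → Fin d → ℝ)
    (hA : ∀ j i, 0 ≤ A j i) (q m w : Fin d → ℝ)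
    (hq : ∀ j, q j = ∑ i, A j i) (hm : ∀ i, m i = ∑ j, A j i)
    (hq1 : ∑ j, q j = 1) (hm0 : ∀ i, 0 < m i) (hm1 : ∑ i, m i = 1)
    (hw : ∀ j, 0 < w j) :
    ∑ i, |m i - (∑ j, w j * A j i) / (∑ j, w j * q j)|
      ≤ (d : ℝ) ^ 2
        * ((Finset.univ : Finset (Fin d)).sup'
            (Finset.univ_nonempty_iff.mpr (Fin.pos_iff_nonempty.mp hd)) w)
        * ((Finset.univ : Finset (Fin d)).sup'
            (Finset.univ_nonempty_iff.mpr (Fin.pos_iff_nonempty.mp hd)) (fun j => 1 / w j))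
        * ((Finset.univ : Finset (Fin d × Fin d × Fin d)).sup'
            ⟨(⟨0, hd⟩, ⟨0, hd⟩, ⟨0, hd⟩), Finset.mem_univ _⟩
            (fun x => |A x.2.1 x.1 / m x.1 - A x.2.1 x.2.2 / m x.2.2|)) := by
  have hne : (Finset.univ : Finset (Fin d)).Nonempty :=
    Finset.univ_nonempty_iff.mpr (Fin.pos_iff_nonempty.mp hd)
  set W := (Finset.univ : Finset (Fin d)).sup'
      (Finset.univ_nonempty_iff.mpr (Fin.pos_iff_nonempty.mp hd)) w with hWdef
  set V := (Finset.univ : Finset (Fin d)).sup'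
      (Finset.univ_nonempty_iff.mpr (Fin.pos_iff_nonempty.mp hd)) (fun j => 1 / w j) with hVdef
  set M := ((Finset.univ : Finset (Fin d × Fin d × Fin d)).sup'
      ⟨(⟨0, hd⟩, ⟨0, hd⟩, ⟨0, hd⟩), Finset.mem_univ _⟩
      (fun x => |A x.2.1 x.1 / m x.1 - A x.2.1 x.2.2 / m x.2.2|)) with hMdef
  set S := ∑ j, w j * q j with hSdef
  set P := fun i => ∑ j, w j * A j i with hPdef
  have hWle : ∀ j, w j ≤ W := fun j => Finset.le_sup' w (Finset.mem_univ j)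
  have hVle : ∀ j, 1 / w j ≤ V := fun j => Finset.le_sup' (fun j => 1 / w j) (Finset.mem_univ j)
  have hMle : ∀ i j k, |A j i / m i - A j k / m k| ≤ M := fun i j k =>
    Finset.le_sup' (fun x : Fin d × Fin d × Fin d => |A x.2.1 x.1 / m x.1 - A x.2.1 x.2.2 / m x.2.2|)
      (Finset.mem_univ (i, j, k))
  have hM0 : 0 ≤ M := le_trans (abs_nonneg _) (hMle ⟨0, hd⟩ ⟨0, hd⟩ ⟨0, hd⟩)
  have hW0 : 0 < W := lt_of_lt_of_le (hw ⟨0, hd⟩) (hWle _)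
  have hV0 : 0 < V := lt_of_lt_of_le (one_div_pos.mpr (hw ⟨0, hd⟩)) (hVle ⟨0, hd⟩)
  have hq0 : ∀ j, 0 ≤ q j := fun j => by rw [hq j]; exact Finset.sum_nonneg fun i _ => hA j i
  -- lower bound on S
  set wmin := (Finset.univ : Finset (Fin d)).inf' hne w with hwmindef
  have hwmin0 : 0 < wmin := by
    rw [Finset.lt_inf'_iff]; exact fun j _ => hw j
  have hwminle : wmin ≤ S := by
    calc wmin = wmin * ∑ j, q j := by rw [hq1]; ring
    _ = ∑ j, wmin * q j := by rw [Finset.mul_sum]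
    _ ≤ ∑ j, w j * q j := Finset.sum_le_sum fun j _ =>
        mul_le_mul_of_nonneg_right (Finset.inf'_le w (Finset.mem_univ j)) (hq0 j)
  have hS0 : 0 < S := lt_of_lt_of_le hwmin0 hwminle
  have hSV : 1 / S ≤ V := by
    obtain ⟨j0, _, hj0⟩ := Finset.exists_mem_eq_inf' hne w
    calc 1 / S ≤ 1 / wmin := by
          apply one_div_le_one_div_of_le hwmin0 hwminle
    _ = 1 / w j0 := by rw [hwmindef, hj0]
    _ ≤ V := hVle j0
  -- key bound per (i, j)
  have key : ∀ i j, |m i * q j - A j i| ≤ m i * M := by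
    intro i j
    have e : m i * q j - A j i = ∑ k, m i * m k * (A j k / m k - A j i / m i) := by
      have h1 : ∀ k : Fin d, m i * m k * (A j k / m k - A j i / m i)
          = m i * A j k - m k * A j i := by
        intro k
        field_simp [(hm0 k).ne', (hm0 i).ne']
      rw [Finset.sum_congr rfl fun k _ => h1 k, Finset.sum_sub_distrib,
        ← Finset.mul_sum, ← Finset.sum_mul, hm1, hq j]
      ring
    rw [e]
    calc |∑ k, m i * m k * (A j k / m k - A j i / m i)|
        ≤ ∑ k, |m i * m k * (A j k / m k - A j i / m i)| := Finset.abs_sum_le_sum_abs _ _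
      _ ≤ ∑ k, m i * m k * M := by
          apply Finset.sum_le_sum
          intro k _
          rw [abs_mul, abs_of_nonneg (mul_nonneg (hm0 i).le (hm0 k).le)]
          exact mul_le_mul_of_nonneg_left (hMle k j i) (mul_nonneg (hm0 i).le (hm0 k).le)
      _ = m i * M := by
          rw [← Finset.sum_mul, ← Finset.mul_sum, hm1]; ring
  -- per-i bound
  set T := ∑ j, w j with hTdef
  have hstep : ∀ i, |m i - P i / S| ≤ m i * M * T / S := by
    intro i
    have e : m i - P i / S = (m i * S - P i) / S := by
      field_simp
    rw [e, abs_div, abs_of_pos hS0, div_le_div_iff_of_pos_right hS0]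
    have e2 : m i * S - P i = ∑ j, w j * (m i * q j - A j i) := by
      rw [hSdef, hPdef, Finset.mul_sum, ← Finset.sum_sub_distrib]
      exact Finset.sum_congr rfl fun j _ => by ring
    rw [e2]
    calc |∑ j, w j * (m i * q j - A j i)| ≤ ∑ j, |w j * (m i * q j - A j i)| :=
        Finset.abs_sum_le_sum_abs _ _
      _ ≤ ∑ j, w j * (m i * M) := by
          apply Finset.sum_le_sum
          intro j _
          rw [abs_mul, abs_of_pos (hw j)]
          exact mul_le_mul_of_nonneg_left (key i j) (hw j).le
      _ = m i * M * T := by rw [← Finset.sum_mul]; ring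
  calc ∑ i, |m i - P i / S| ≤ ∑ i, m i * M * T / S := Finset.sum_le_sum fun i _ => hstep i
    _ = M * T / S := by
        rw [← Finset.sum_div, ← Finset.sum_mul, ← Finset.sum_mul, hm1]; ring
    _ = M * T * (1 / S) := by ring
    _ ≤ M * ((d : ℝ) * W) * V := by
        have hT : T ≤ (d : ℝ) * W := by
          calc T ≤ ∑ _j : Fin d, W := Finset.sum_le_sum fun j _ => hWle j
          _ = (d : ℝ) * W := by simp [Finset.card_univ]
        have hT0 : 0 ≤ T := Finset.sum_nonneg fun j _ => (hw j).le
        have h1 : M * T ≤ M * ((d:ℝ) * W) := mul_le_mul_of_nonneg_left hT hM0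
        have h2 : 0 ≤ 1 / S := by positivity
        nlinarith [mul_le_mul_of_nonneg_right h1 h2, mul_le_mul_of_nonneg_left hSV (mul_nonneg hM0 hT0)]
    _ ≤ (d : ℝ) ^ 2 * W * V * M := by
        have hd1 : (1:ℝ) ≤ (d:ℝ) := by exact_mod_cast hd
        have hdd : (d:ℝ) ≤ (d:ℝ) ^ 2 := by nlinarith
        have hnn : 0 ≤ W * V * M := mul_nonneg (mul_nonneg hW0.le hV0.le) hM0
        calc M * ((d:ℝ) * W) * V = (d:ℝ) * (W * V * M) := by ring
          _ ≤ (d:ℝ) ^ 2 * (W * V * M) := mul_le_mul_of_nonneg_right hdd hnn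
          _ = (d:ℝ) ^ 2 * W * V * M := by ring
end
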